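/- Irrelevance of variables, formula part (Lemma 1(1) of the paper): let φ be a DL-PA∥ formula, P ⊆ ℙ with vars(φ) ⊆ P, and let M₁, M₁' be models with M₁∩P = M₁'∩P. Then M₁ ⊨ φ implies M₁' ⊨ φ. -/

import Mathlib

set_option maxHeartbeats 1000000

/-- Propositional variables. -/
abbrev PVar := ℕ

/-- A DL-PA∥ model: readable variables `R`, writable variables `W`,
valuation `V`, with writability implying readability. -/
@[ext]
structure Model where
  R : Set PVar
  W : Set PVar
  V : Set PVar
  sub : W ⊆ R

mutual
/-- Formulas of DL-PA∥. -/
inductive Formula : Type where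
  | atom : PVar → Formula
  | top  : Formula
  | neg  : Formula → Formula
  | or   : Formula → Formula → Formula
  | dia  : Program → Formula → Formula
/-- Programs of DL-PA∥. -/
inductive Program : Type where
  | assignT : PVar → Program   -- +p
  | assignF : PVar → Program   -- −p
  | addR : PVar → Program      -- +r p
  | remR : PVar → Program      -- −r p
  | addW : PVar → Program      -- +w p
  | remW : PVar → Program      -- −w p
  | testEx : Formula → Program -- exogenous test φ?
  | testEn : Formula → Program -- endogenous test φ?ⁿ
  | seq : Program → Program → Program
  | choice : Program → Program → Program
  | star : Program → Program
  | par : Program → Program → Program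
end

/-- RW-disjointness. -/
def RWdisjoint (M1 M2 : Model) : Prop :=
  M1.W ∩ M2.R = ∅ ∧ M2.W ∩ M1.R = ∅

/-- Split relation `M ◁ (M₁,M₂)`. -/
def SplitRel (M M1 M2 : Model) : Prop :=
  RWdisjoint M1 M2 ∧ M.R = M1.R ∪ M2.R ∧ M.W = M1.W ∪ M2.W ∧ M.V = M1.V ∧ M.V = M2.V

/-- Merge relation `M ▷ (M₁,M₂)`. -/
def MergeRel (M M1 M2 : Model) : Prop :=
  RWdisjoint M1 M2 ∧ M.R = M1.R ∪ M2.R ∧ M.W = M1.W ∪ M2.W ∧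
  M1.V \ M.W = M2.V \ M.W ∧ M.V = (M1.V ∩ M1.W) ∪ (M2.V ∩ M2.W) ∪ (M1.V ∩ M2.V)

/-- Indistinguishability `M ∼ M'`. -/
def Indist (M M' : Model) : Prop :=
  M.R = M'.R ∧ M.W = M'.W ∧ M.V ∩ M.R = M'.V ∩ M'.R

mutual
/-- Truth of a formula in a model. -/
def Sat : Model → Formula → Prop
  | M, .atom p => p ∈ M.V
  | _, .top => True
  | M, .neg φ => ¬ Sat M φ
  | M, .or φ ψ => Sat M φ ∨ Sat M ψ
  | M, .dia π φ => ∃ M', Interp π M M' ∧ Sat M' φ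
/-- Interpretation of programs as relations between models. -/
def Interp : Program → Model → Model → Prop
  | .assignT p, M, M' => M'.R = M.R ∧ M'.W = M.W ∧ M'.V = M.V ∪ {p} ∧ p ∈ M.W
  | .assignF p, M, M' => M'.R = M.R ∧ M'.W = M.W ∧ M'.V = M.V \ {p} ∧ p ∈ M.W
  | .addR p, M, M' => M'.R = M.R ∪ {p} ∧ M'.W = M.W ∧ M'.V = M.V
  | .remR p, M, M' => M'.R = M.R \ {p} ∧ M'.W = M.W \ {p} ∧ M'.V = M.V
  | .addW p, M, M' => M'.R = M.R ∪ {p} ∧ M'.W = M.W ∪ {p} ∧ M'.V = M.V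
  | .remW p, M, M' => M'.R = M.R ∧ M'.W = M.W \ {p} ∧ M'.V = M.V
  | .testEx φ, M, M' => M = M' ∧ Sat M φ
  | .testEn φ, M, M' => M = M' ∧ ∀ M'', Indist M'' M → Sat M'' φ
  | .seq π1 π2, M, M' => ∃ M'', Interp π1 M M'' ∧ Interp π2 M'' M'
  | .choice π1 π2, M, M' => Interp π1 M M' ∨ Interp π2 M M'
  | .star π, M, M' => Relation.ReflTransGen (fun A B => Interp π A B) M M'
  | .par π1 π2, M, M' => ∃ M1 M2 M1' M2',
      SplitRel M M1 M2 ∧ MergeRel M' M1' M2' ∧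
      Interp π1 M1 M1' ∧ Interp π2 M2 M2' ∧
      M1.R = M1'.R ∧ M1.W = M1'.W ∧ M1.V \ M1.W = M1'.V \ M1'.W ∧
      M2.R = M2'.R ∧ M2.W = M2'.W ∧ M2.V \ M2.W = M2'.V \ M2'.W
end

mutual
/-- Propositional variables occurring in a formula. -/
def varsF : Formula → Finset PVar
  | .atom p => {p}
  | .top => ∅
  | .neg φ => varsF φ
  | .or φ ψ => varsF φ ∪ varsF ψ
  | .dia π φ => varsP π ∪ varsF φ
/-- Propositional variables occurring in a program. -/
def varsP : Program → Finset PVar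
  | .assignT p => {p}
  | .assignF p => {p}
  | .addR p => {p}
  | .remR p => {p}
  | .addW p => {p}
  | .remW p => {p}
  | .testEx φ => varsF φ
  | .testEn φ => varsF φ
  | .seq π1 π2 => varsP π1 ∪ varsP π2
  | .choice π1 π2 => varsP π1 ∪ varsP π2
  | .star π => varsP π
  | .par π1 π2 => varsP π1 ∪ varsP π2
end

/-- `⊥`. -/
def botF : Formula := .neg .top
/-- Conjunction. -/
def andF (φ ψ : Formula) : Formula := .neg (.or (.neg φ) (.neg ψ))
/-- Implication. -/
def impF (φ ψ : Formula) : Formula := .or (.neg φ) ψ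
/-- Bi-implication. -/
def iffF (φ ψ : Formula) : Formula := andF (impF φ ψ) (impF ψ φ)
/-- `[π]φ`. -/
def boxF (π : Program) (φ : Formula) : Formula := .neg (.dia π (.neg φ))
/-- `w(p)`: `p` is writable. -/
def wF (p : PVar) : Formula := .dia (.assignT p) .top
/-- `r(p)`: `p` is readable. -/
def rF (p : PVar) : Formula :=
  .or (.dia (.testEn (.atom p)) .top) (.dia (.testEn (.neg (.atom p))) .top)

/-- Restriction `M ∩ P` of a model to a set of variables. -/
def interModel (M : Model) (P : Set PVar) : Model :=
  ⟨M.R ∩ P, M.W ∩ P, M.V ∩ P, Set.inter_subset_inter M.sub (subset_refl P)⟩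

/-- A formula is valid iff true in every model. -/
def Valid (φ : Formula) : Prop := ∀ M : Model, Sat M φ

/-- Pointwise agreement of two models on a set of variables. -/
def Agree (P : Set PVar) (M M' : Model) : Prop :=
  ∀ q ∈ P, (q ∈ M.R ↔ q ∈ M'.R) ∧ (q ∈ M.W ↔ q ∈ M'.W) ∧ (q ∈ M.V ↔ q ∈ M'.V)

lemma Agree.symm' {P : Set PVar} {M M' : Model} (h : Agree P M M') : Agree P M' M := by
  intro q hq; have := h q hq; tauto

lemma agree_of_inter {P : Set PVar} {M M' : Model}
    (h : interModel M P = interModel M' P) : Agree P M M' := by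
  intro q hq
  have hR := congrArg Model.R h
  have hW := congrArg Model.W h
  have hV := congrArg Model.V h
  simp only [interModel] at hR hW hV
  have hR' := Set.ext_iff.mp hR q
  have hW' := Set.ext_iff.mp hW q
  have hV' := Set.ext_iff.mp hV q
  simp only [Set.mem_inter_iff] at hR' hW' hV'
  tauto

/-- Frame lemma: a program does not change variables outside `varsP π`. -/
theorem frame : ∀ (π : Program) (M N : Model), Interp π M N → ∀ q : PVar, q ∉ varsP π →
    ((q ∈ N.R ↔ q ∈ M.R) ∧ (q ∈ N.W ↔ q ∈ M.W) ∧ (q ∈ N.V ↔ q ∈ M.V))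
  | .assignT p, M, N, h, q, hq => by
    simp only [Interp] at h
    simp only [varsP, Finset.mem_singleton] at hq
    obtain ⟨hR, hW, hV, -⟩ := h
    simp [hR, hW, hV, hq]
  | .assignF p, M, N, h, q, hq => by
    simp only [Interp] at h
    simp only [varsP, Finset.mem_singleton] at hq
    obtain ⟨hR, hW, hV, -⟩ := h
    simp [hR, hW, hV, hq]
  | .addR p, M, N, h, q, hq => by
    simp only [Interp] at h
    simp only [varsP, Finset.mem_singleton] at hq
    obtain ⟨hR, hW, hV⟩ := h
    simp [hR, hW, hV, hq]
  | .remR p, M, N, h, q, hq => by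
    simp only [Interp] at h
    simp only [varsP, Finset.mem_singleton] at hq
    obtain ⟨hR, hW, hV⟩ := h
    simp [hR, hW, hV, hq]
  | .addW p, M, N, h, q, hq => by
    simp only [Interp] at h
    simp only [varsP, Finset.mem_singleton] at hq
    obtain ⟨hR, hW, hV⟩ := h
    simp [hR, hW, hV, hq]
  | .remW p, M, N, h, q, hq => by
    simp only [Interp] at h
    simp only [varsP, Finset.mem_singleton] at hq
    obtain ⟨hR, hW, hV⟩ := h
    simp [hR, hW, hV, hq]
  | .testEx φ, M, N, h, q, hq => by
    simp only [Interp] at h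
    rw [h.1]
    exact ⟨Iff.rfl, Iff.rfl, Iff.rfl⟩
  | .testEn φ, M, N, h, q, hq => by
    simp only [Interp] at h
    rw [h.1]
    exact ⟨Iff.rfl, Iff.rfl, Iff.rfl⟩
  | .seq π1 π2, M, N, h, q, hq => by
    simp only [Interp] at h
    obtain ⟨K, h1, h2⟩ := h
    simp only [varsP, Finset.mem_union] at hq
    have f1 := frame π1 M K h1 q (fun c => hq (Or.inl c))
    have f2 := frame π2 K N h2 q (fun c => hq (Or.inr c))
    exact ⟨f2.1.trans f1.1, f2.2.1.trans f1.2.1, f2.2.2.trans f1.2.2⟩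
  | .choice π1 π2, M, N, h, q, hq => by
    simp only [Interp] at h
    simp only [varsP, Finset.mem_union] at hq
    rcases h with h | h
    · exact frame π1 M N h q (fun c => hq (Or.inl c))
    · exact frame π2 M N h q (fun c => hq (Or.inr c))
  | .star π, M, N, h, q, hq => by
    simp only [Interp] at h
    simp only [varsP] at hq
    induction h with
    | refl => exact ⟨Iff.rfl, Iff.rfl, Iff.rfl⟩
    | tail hab hstep ih =>
      have f := frame π _ _ hstep q hq
      exact ⟨f.1.trans ih.1, f.2.1.trans ih.2.1, f.2.2.trans ih.2.2⟩
  | .par π1 π2, M, N, h, q, hq => by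
    simp only [Interp] at h
    simp only [varsP, Finset.mem_union] at hq
    obtain ⟨M1, M2, M1', M2', hsp, hmg, h1, h2, hR1, hW1, hVW1, hR2, hW2, hVW2⟩ := h
    obtain ⟨-, sRu, sWu, sV1, sV2⟩ := hsp
    obtain ⟨-, mRu, mWu, mVd, mVe⟩ := hmg
    have f1 := frame π1 M1 M1' h1 q (fun c => hq (Or.inl c))
    have f2 := frame π2 M2 M2' h2 q (fun c => hq (Or.inr c))
    refine ⟨?_, ?_, ?_⟩
    · rw [mRu, sRu, hR1, hR2]
    · rw [mWu, sWu, hW1, hW2]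
    · rw [mVe, sV1]
      have e1 : q ∈ M.V ↔ q ∈ M1.V := by rw [sV1]
      have e2 : q ∈ M.V ↔ q ∈ M2.V := by rw [sV2]
      have v1 := f1.2.2
      have v2 := f2.2.2
      simp only [Set.mem_union, Set.mem_inter_iff]
      rw [sV1] at e1 e2
      itauto

lemma testEn_aux (φ : Formula) (P : Set PVar)
    (IH : ∀ A B : Model, Agree P A B → Sat A φ → Sat B φ)
    (M M' : Model) (hA : Agree P M M')
    (hall : ∀ M'', Indist M'' M → Sat M'' φ) :
    ∀ M'', Indist M'' M' → Sat M'' φ := by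
  intro M'' hind
  obtain ⟨eR, eW, eV⟩ := hind
  let M3 : Model := ⟨(M''.R ∩ P) ∪ (M.R \ P), (M''.W ∩ P) ∪ (M.W \ P),
    (M''.V ∩ P) ∪ (M.V \ P),
    Set.union_subset_union (Set.inter_subset_inter M''.sub (subset_refl P))
      (Set.diff_subset_diff M.sub (subset_refl P))⟩
  have h3R : M3.R = (M''.R ∩ P) ∪ (M.R \ P) := rfl
  have h3W : M3.W = (M''.W ∩ P) ∪ (M.W \ P) := rfl
  have h3V : M3.V = (M''.V ∩ P) ∪ (M.V \ P) := rfl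
  have hind3 : Indist M3 M := by
    refine ⟨?_, ?_, ?_⟩
    · rw [h3R]; ext q
      by_cases hq : q ∈ P
      · have a := hA q hq
        have e := Set.ext_iff.mp eR q
        simp only [Set.mem_union, Set.mem_inter_iff, Set.mem_diff]
        first | itauto | itauto! | tauto
      · simp only [Set.mem_union, Set.mem_inter_iff, Set.mem_diff]
        first | itauto | itauto! | tauto
    · rw [h3W]; ext q
      by_cases hq : q ∈ P
      · have a := hA q hq
        have e := Set.ext_iff.mp eW q
        simp only [Set.mem_union, Set.mem_inter_iff, Set.mem_diff]
        first | itauto | itauto! | tauto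
      · simp only [Set.mem_union, Set.mem_inter_iff, Set.mem_diff]
        first | itauto | itauto! | tauto
    · rw [h3V, h3R]; ext q
      by_cases hq : q ∈ P
      · have a := hA q hq
        have e := Set.ext_iff.mp eV q
        simp only [Set.mem_inter_iff] at e
        simp only [Set.mem_union, Set.mem_inter_iff, Set.mem_diff]
        first | itauto | itauto! | tauto
      · simp only [Set.mem_union, Set.mem_inter_iff, Set.mem_diff]
        first | itauto | itauto! | tauto
  have hsat3 : Sat M3 φ := hall M3 hind3
  refine IH M3 M'' ?_ hsat3
  intro q hq
  rw [h3R, h3W, h3V]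
  simp only [Set.mem_union, Set.mem_inter_iff, Set.mem_diff]
  first | itauto | itauto! | tauto

set_option maxHeartbeats 10000000 in
lemma par_aux (π1 π2 : Program) (P : Set PVar)
    (hv1 : ↑(varsP π1) ⊆ P) (hv2 : ↑(varsP π2) ⊆ P)
    (IH1 : ∀ A B C : Model, Agree P A B → Interp π1 A C → ∃ C', Interp π1 B C' ∧ Agree P C C')
    (IH2 : ∀ A B C : Model, Agree P A B → Interp π2 A C → ∃ C', Interp π2 B C' ∧ Agree P C C')
    (M M' N : Model) (hA : Agree P M M') (hI : Interp (.par π1 π2) M N) :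
    ∃ N', Interp (.par π1 π2) M' N' ∧ Agree P N N' := by
  simp only [Interp] at hI ⊢
  obtain ⟨M1, M2, M1', M2', hsp, hmg, h1, h2, hR1, hW1, hVW1, hR2, hW2, hVW2⟩ := hI
  obtain ⟨⟨d1, d2⟩, sRu, sWu, sV1, sV2⟩ := hsp
  obtain ⟨-, mRu, mWu, mVd, mVe⟩ := hmg
  -- the split of M'
  obtain ⟨M1n, e1R, e1W, e1V⟩ :
      ∃ X : Model, X.R = (M1.R ∩ P) ∪ (M'.R \ P) ∧ X.W = (M1.W ∩ P) ∪ (M'.W \ P) ∧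
        X.V = M'.V :=
    ⟨⟨(M1.R ∩ P) ∪ (M'.R \ P), (M1.W ∩ P) ∪ (M'.W \ P), M'.V,
      Set.union_subset_union (Set.inter_subset_inter M1.sub (subset_refl P))
        (Set.diff_subset_diff M'.sub (subset_refl P))⟩, rfl, rfl, rfl⟩
  obtain ⟨M2n, e2R, e2W, e2V⟩ :
      ∃ X : Model, X.R = M2.R ∩ P ∧ X.W = M2.W ∩ P ∧ X.V = M'.V :=
    ⟨⟨M2.R ∩ P, M2.W ∩ P, M'.V, Set.inter_subset_inter M2.sub (subset_refl P)⟩,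
      rfl, rfl, rfl⟩
  have a1 : Agree P M1 M1n := by
    intro q hq
    have a := hA q hq
    have ev := Set.ext_iff.mp sV1 q
    rw [e1R, e1W, e1V]
    simp only [Set.mem_union, Set.mem_inter_iff, Set.mem_diff]
    first | itauto | itauto! | tauto
  have a2 : Agree P M2 M2n := by
    intro q hq
    have a := hA q hq
    have ev := Set.ext_iff.mp sV2 q
    rw [e2R, e2W, e2V]
    simp only [Set.mem_union, Set.mem_inter_iff, Set.mem_diff]
    first | itauto | itauto! | tauto
  obtain ⟨N1, hN1, hA1⟩ := IH1 M1 M1n M1' a1 h1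
  obtain ⟨N2, hN2, hA2⟩ := IH2 M2 M2n M2' a2 h2
  have f1 : ∀ q : PVar, q ∉ P →
      ((q ∈ N1.R ↔ q ∈ M1n.R) ∧ (q ∈ N1.W ↔ q ∈ M1n.W) ∧ (q ∈ N1.V ↔ q ∈ M1n.V)) :=
    fun q hq => frame π1 M1n N1 hN1 q (fun c => hq (hv1 (Finset.mem_coe.mpr c)))
  have f2 : ∀ q : PVar, q ∉ P →
      ((q ∈ N2.R ↔ q ∈ M2n.R) ∧ (q ∈ N2.W ↔ q ∈ M2n.W) ∧ (q ∈ N2.V ↔ q ∈ M2n.V)) :=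
    fun q hq => frame π2 M2n N2 hN2 q (fun c => hq (hv2 (Finset.mem_coe.mpr c)))
  -- side equalities
  have eN1R : N1.R = M1n.R := by
    ext q
    by_cases hq : q ∈ P
    · have b := (hA1 q hq).1
      have e := Set.ext_iff.mp hR1 q
      rw [e1R]
      simp only [Set.mem_union, Set.mem_inter_iff, Set.mem_diff]
      first | itauto | itauto! | tauto
    · exact (f1 q hq).1
  have eN1W : N1.W = M1n.W := by
    ext q
    by_cases hq : q ∈ P
    · have b := (hA1 q hq).2.1
      have e := Set.ext_iff.mp hW1 q
      rw [e1W]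
      simp only [Set.mem_union, Set.mem_inter_iff, Set.mem_diff]
      first | itauto | itauto! | tauto
    · exact (f1 q hq).2.1
  have eN2R : N2.R = M2n.R := by
    ext q
    by_cases hq : q ∈ P
    · have b := (hA2 q hq).1
      have e := Set.ext_iff.mp hR2 q
      rw [e2R]
      simp only [Set.mem_inter_iff]
      first | itauto | itauto! | tauto
    · exact (f2 q hq).1
  have eN2W : N2.W = M2n.W := by
    ext q
    by_cases hq : q ∈ P
    · have b := (hA2 q hq).2.1
      have e := Set.ext_iff.mp hW2 q
      simp only [e2W, Set.mem_inter_iff]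
      first | itauto | itauto! | tauto
    · exact (f2 q hq).2.1
  have eVW1 : M1n.V \ M1n.W = N1.V \ N1.W := by
    ext q
    by_cases hq : q ∈ P
    · have b := hA1 q hq
      have a := hA q hq
      have evw := Set.ext_iff.mp hVW1 q
      have ev := Set.ext_iff.mp sV1 q
      have ew := Set.ext_iff.mp hW1 q
      rw [e1V, e1W]
      simp only [Set.mem_diff] at evw
      simp only [Set.mem_diff, Set.mem_union, Set.mem_inter_iff]
      first | itauto | itauto! | tauto
    · have f := f1 q hq
      simp only [Set.mem_diff]
      first | itauto | itauto! | tauto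
  have eVW2 : M2n.V \ M2n.W = N2.V \ N2.W := by
    ext q
    by_cases hq : q ∈ P
    · have b := hA2 q hq
      have a := hA q hq
      have evw := Set.ext_iff.mp hVW2 q
      have ev := Set.ext_iff.mp sV2 q
      have ew := Set.ext_iff.mp hW2 q
      rw [e2V, e2W]
      simp only [Set.mem_diff] at evw
      simp only [Set.mem_diff, Set.mem_union, Set.mem_inter_iff]
      first | itauto | itauto! | tauto
    · have f := f2 q hq
      simp only [Set.mem_diff]
      first | itauto | itauto! | tauto
  -- the merged result
  obtain ⟨N', enR, enW, enV⟩ :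
      ∃ X : Model, X.R = N1.R ∪ N2.R ∧ X.W = N1.W ∪ N2.W ∧
        X.V = (N1.V ∩ N1.W) ∪ (N2.V ∩ N2.W) ∪ (N1.V ∩ N2.V) :=
    ⟨⟨N1.R ∪ N2.R, N1.W ∪ N2.W, (N1.V ∩ N1.W) ∪ (N2.V ∩ N2.W) ∪ (N1.V ∩ N2.V),
      Set.union_subset_union N1.sub N2.sub⟩, rfl, rfl, rfl⟩
  have disj1 : M1n.W ∩ M2n.R = ∅ := by
    ext q
    have e := Set.eq_empty_iff_forall_notMem.mp d1 q
    rw [e1W, e2R]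
    simp only [Set.mem_inter_iff, Set.mem_union, Set.mem_diff, Set.mem_empty_iff_false]
    first | itauto | itauto! | tauto
  have disj2 : M2n.W ∩ M1n.R = ∅ := by
    ext q
    have e := Set.eq_empty_iff_forall_notMem.mp d2 q
    rw [e2W, e1R]
    simp only [Set.mem_inter_iff, Set.mem_union, Set.mem_diff, Set.mem_empty_iff_false]
    first | itauto | itauto! | tauto
  refine ⟨N', ⟨M1n, M2n, N1, N2, ?_, ?_, hN1, hN2,
    eN1R.symm, eN1W.symm, eVW1, eN2R.symm, eN2W.symm, eVW2⟩, ?_⟩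
  · -- SplitRel M' M1n M2n
    refine ⟨⟨disj1, disj2⟩, ?_, ?_, e1V.symm, e2V.symm⟩
    · ext q
      rw [e1R, e2R]
      by_cases hq : q ∈ P
      · have a := hA q hq
        have e := Set.ext_iff.mp sRu q
        simp only [Set.mem_union] at e
        simp only [Set.mem_union, Set.mem_inter_iff, Set.mem_diff]
        first | itauto | itauto! | tauto
      · simp only [Set.mem_union, Set.mem_inter_iff, Set.mem_diff]
        first | itauto | itauto! | tauto
    · ext q
      rw [e1W, e2W]
      by_cases hq : q ∈ P
      · have a := hA q hq
        have e := Set.ext_iff.mp sWu q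
        simp only [Set.mem_union] at e
        simp only [Set.mem_union, Set.mem_inter_iff, Set.mem_diff]
        first | itauto | itauto! | tauto
      · simp only [Set.mem_union, Set.mem_inter_iff, Set.mem_diff]
        first | itauto | itauto! | tauto
  · -- MergeRel N' N1 N2
    refine ⟨⟨?_, ?_⟩, enR, enW, ?_, enV⟩
    · rw [eN1W, eN2R]; exact disj1
    · rw [eN2W, eN1R]; exact disj2
    · rw [enW]
      ext q
      have ew1 := Set.ext_iff.mp eN1W q
      have ew2 := Set.ext_iff.mp eN2W q
      by_cases hq : q ∈ P
      · have b1 := hA1 q hq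
        have b2 := hA2 q hq
        have evd := Set.ext_iff.mp mVd q
        have emw := Set.ext_iff.mp mWu q
        have eww1 := Set.ext_iff.mp hW1 q
        have eww2 := Set.ext_iff.mp hW2 q
        rw [e1W] at ew1
        rw [e2W] at ew2
        simp only [Set.mem_diff] at evd
        simp only [Set.mem_union] at emw
        simp only [Set.mem_union, Set.mem_inter_iff] at ew1 ew2
        simp only [Set.mem_diff, Set.mem_union]
        first | itauto | itauto! | tauto
      · have g1 := f1 q hq
        have g2 := f2 q hq
        rw [e1V] at g1
        rw [e2V] at g2
        simp only [Set.mem_diff, Set.mem_union]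
        first | itauto | itauto! | tauto
  · -- Agree P N N'
    intro q hq
    have b1 := hA1 q hq
    have b2 := hA2 q hq
    have er := Set.ext_iff.mp mRu q
    have ew := Set.ext_iff.mp mWu q
    have ev := Set.ext_iff.mp mVe q
    rw [enR, enW, enV]
    simp only [Set.mem_union] at er ew
    simp only [Set.mem_union, Set.mem_inter_iff] at ev
    simp only [Set.mem_union, Set.mem_inter_iff]
    first | itauto | itauto! | tauto

mutual

theorem satAgree : ∀ (φ : Formula) (P : Set PVar), ↑(varsF φ) ⊆ P →
    ∀ M M' : Model, Agree P M M' → Sat M φ → Sat M' φ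
  | .atom p, P, hv, M, M', hA, h => by
    simp only [Sat] at h ⊢
    have hp : p ∈ P := hv (by simp [varsF])
    exact ((hA p hp).2.2).mp h
  | .top, _, _, _, _, _, _ => by simp only [Sat]
  | .neg φ, P, hv, M, M', hA, h => by
    simp only [Sat] at h ⊢
    have hv' : ↑(varsF φ) ⊆ P := by simpa only [varsF] using hv
    exact fun c => h (satAgree φ P hv' M' M hA.symm' c)
  | .or φ ψ, P, hv, M, M', hA, h => by
    simp only [Sat] at h ⊢
    simp only [varsF, Finset.coe_union, Set.union_subset_iff] at hv
    rcases h with h | h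
    · exact Or.inl (satAgree φ P hv.1 M M' hA h)
    · exact Or.inr (satAgree ψ P hv.2 M M' hA h)
  | .dia π φ, P, hv, M, M', hA, h => by
    simp only [Sat] at h ⊢
    simp only [varsF, Finset.coe_union, Set.union_subset_iff] at hv
    obtain ⟨N, hN, hs⟩ := h
    obtain ⟨N', hN', hAN⟩ := interpAgree π P hv.1 M M' N hA hN
    exact ⟨N', hN', satAgree φ P hv.2 N N' hAN hs⟩

theorem interpAgree : ∀ (π : Program) (P : Set PVar), ↑(varsP π) ⊆ P →
    ∀ M M' N : Model, Agree P M M' → Interp π M N →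
    ∃ N', Interp π M' N' ∧ Agree P N N'
  | .assignT p, P, hv, M, M', N, hA, hI => by
    simp only [Interp] at hI
    have hp : p ∈ P := hv (by simp [varsP])
    obtain ⟨hR, hW, hV, hpW⟩ := hI
    refine ⟨⟨M'.R, M'.W, M'.V ∪ {p}, M'.sub⟩, ?_, ?_⟩
    · simp only [Interp]
      exact ⟨trivial, trivial, trivial, ((hA p hp).2.1).mp hpW⟩
    · intro q hq
      have a := hA q hq
      rw [hR, hW, hV]
      simp only [Set.mem_union, Set.mem_singleton_iff]
      itauto
  | .assignF p, P, hv, M, M', N, hA, hI => by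
    simp only [Interp] at hI
    have hp : p ∈ P := hv (by simp [varsP])
    obtain ⟨hR, hW, hV, hpW⟩ := hI
    refine ⟨⟨M'.R, M'.W, M'.V \ {p}, M'.sub⟩, ?_, ?_⟩
    · simp only [Interp]
      exact ⟨trivial, trivial, trivial, ((hA p hp).2.1).mp hpW⟩
    · intro q hq
      have a := hA q hq
      rw [hR, hW, hV]
      simp only [Set.mem_diff, Set.mem_singleton_iff]
      itauto
  | .addR p, P, hv, M, M', N, hA, hI => by
    simp only [Interp] at hI
    have hp : p ∈ P := hv (by simp [varsP])
    obtain ⟨hR, hW, hV⟩ := hI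
    refine ⟨⟨M'.R ∪ {p}, M'.W, M'.V, M'.sub.trans Set.subset_union_left⟩, ?_, ?_⟩
    · simp [Interp]
    · intro q hq
      have a := hA q hq
      rw [hR, hW, hV]
      simp only [Set.mem_union, Set.mem_singleton_iff]
      itauto
  | .remR p, P, hv, M, M', N, hA, hI => by
    simp only [Interp] at hI
    have hp : p ∈ P := hv (by simp [varsP])
    obtain ⟨hR, hW, hV⟩ := hI
    refine ⟨⟨M'.R \ {p}, M'.W \ {p}, M'.V,
      Set.diff_subset_diff M'.sub (subset_refl _)⟩, ?_, ?_⟩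
    · simp [Interp]
    · intro q hq
      have a := hA q hq
      rw [hR, hW, hV]
      simp only [Set.mem_diff, Set.mem_singleton_iff]
      itauto
  | .addW p, P, hv, M, M', N, hA, hI => by
    simp only [Interp] at hI
    have hp : p ∈ P := hv (by simp [varsP])
    obtain ⟨hR, hW, hV⟩ := hI
    refine ⟨⟨M'.R ∪ {p}, M'.W ∪ {p}, M'.V,
      Set.union_subset_union M'.sub (subset_refl _)⟩, ?_, ?_⟩
    · simp [Interp]
    · intro q hq
      have a := hA q hq
      rw [hR, hW, hV]
      simp only [Set.mem_union, Set.mem_singleton_iff]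
      itauto
  | .remW p, P, hv, M, M', N, hA, hI => by
    simp only [Interp] at hI
    have hp : p ∈ P := hv (by simp [varsP])
    obtain ⟨hR, hW, hV⟩ := hI
    refine ⟨⟨M'.R, M'.W \ {p}, M'.V, Set.diff_subset.trans M'.sub⟩, ?_, ?_⟩
    · simp [Interp]
    · intro q hq
      have a := hA q hq
      rw [hR, hW, hV]
      simp only [Set.mem_diff, Set.mem_singleton_iff]
      itauto
  | .testEx φ, P, hv, M, M', N, hA, hI => by
    simp only [Interp] at hI
    have hv' : ↑(varsF φ) ⊆ P := by simpa only [varsP] using hv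
    obtain ⟨rfl, hs⟩ := hI
    exact ⟨M', by simp only [Interp]; exact ⟨trivial, satAgree φ P hv' M M' hA hs⟩, hA⟩
  | .testEn φ, P, hv, M, M', N, hA, hI => by
    simp only [Interp] at hI
    have hv' : ↑(varsF φ) ⊆ P := by simpa only [varsP] using hv
    obtain ⟨rfl, hall⟩ := hI
    refine ⟨M', ?_, hA⟩
    simp only [Interp]
    exact ⟨trivial, testEn_aux φ P (fun A B => satAgree φ P hv' A B) M M' hA hall⟩
  | .seq π1 π2, P, hv, M, M', N, hA, hI => by
    simp only [Interp] at hI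
    simp only [varsP, Finset.coe_union, Set.union_subset_iff] at hv
    obtain ⟨K, h1, h2⟩ := hI
    obtain ⟨K', hK', hAK⟩ := interpAgree π1 P hv.1 M M' K hA h1
    obtain ⟨N', hN', hAN⟩ := interpAgree π2 P hv.2 K K' N hAK h2
    exact ⟨N', by simp only [Interp]; exact ⟨K', hK', hN'⟩, hAN⟩
  | .choice π1 π2, P, hv, M, M', N, hA, hI => by
    simp only [Interp] at hI
    simp only [varsP, Finset.coe_union, Set.union_subset_iff] at hv
    rcases hI with h | h
    · obtain ⟨N', hN', hAN⟩ := interpAgree π1 P hv.1 M M' N hA h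
      exact ⟨N', by simp only [Interp]; exact Or.inl hN', hAN⟩
    · obtain ⟨N', hN', hAN⟩ := interpAgree π2 P hv.2 M M' N hA h
      exact ⟨N', by simp only [Interp]; exact Or.inr hN', hAN⟩
  | .star π, P, hv, M, M', N, hA, hI => by
    simp only [Interp] at hI
    have hv' : ↑(varsP π) ⊆ P := by simpa only [varsP] using hv
    induction hI with
    | refl => exact ⟨M', by simp only [Interp]; exact Relation.ReflTransGen.refl, hA⟩
    | @tail b c hab hstep ih =>
      obtain ⟨b', hb', hAb⟩ := ih
      obtain ⟨N', hstep', hAN⟩ := interpAgree π P hv' b b' c hAb hstep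
      refine ⟨N', ?_, hAN⟩
      simp only [Interp] at hb' ⊢
      exact hb'.tail hstep'
  | .par π1 π2, P, hv, M, M', N, hA, hI => by
    simp only [varsP, Finset.coe_union, Set.union_subset_iff] at hv
    exact par_aux π1 π2 P hv.1 hv.2
      (fun A B C => interpAgree π1 P hv.1 A B C)
      (fun A B C => interpAgree π2 P hv.2 A B C) M M' N hA hI

end

/-- Irrelevance of variables, formula part (Lemma 1(1)): if
`vars(φ) ⊆ P` and `M₁ ∩ P = M₁' ∩ P` then `M₁ ⊨ φ` implies `M₁' ⊨ φ`. -/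
theorem irrelevant_variables_formula (φ : Formula) (P : Set PVar)
    (hP : ↑(varsF φ) ⊆ P) (M1 M1' : Model)
    (h : interModel M1 P = interModel M1' P) :
    Sat M1 φ → Sat M1' φ :=
  satAgree φ P hP M1 M1' (agree_of_inter h)
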